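/- Let Γ be a group, σ an automorphism of Γ, r ≥ 1 an integer, π : Γ → GL(V) a finite-dimensional complex representation, and S : V → V a linear automorphism such that S ∘ π(h) ∘ S⁻¹ = π(σ^r(h)) for all h ∈ Γ. Then for every g ∈ Γ, the linear endomorphism of V^{⊗r} determined by v₁ ⊗ v₂ ⊗ ⋯ ⊗ v_r ↦ π(g)(S(v_r)) ⊗ π(σ⁻¹(g))(v₁) ⊗ π(σ⁻²(g))(v₂) ⊗ ⋯ ⊗ π(σ^{−(r−1)}(g))(v_{r−1}) has trace equal to Tr(π(g·σ(g)·σ²(g)⋯σ^{r−1}(g)) ∘ S). -/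

import Mathlib

noncomputable section Stmt10Aux

open PiTensorProduct

variable {ι V : Type*} [Fintype ι] [DecidableEq ι] [AddCommGroup V] [Module ℂ V]

namespace Stmt10Aux

variable (b : Module.Basis ι ℂ V) (r : ℕ)

/-- The coordinate multilinear map. -/
def coordML : MultilinearMap ℂ (fun _ : Fin r => V) ((Fin r → ι) → ℂ) :=
  MultilinearMap.pi fun p =>
    (MultilinearMap.mkPiAlgebra ℂ (Fin r) ℂ).compLinearMap
      fun j => Finsupp.lapply (p j) ∘ₗ (b.repr.toLinearMap)

lemma coordML_apply (v : Fin r → V) (p : Fin r → ι) :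
    coordML b r v p = ∏ j, b.repr (v j) (p j) := by
  simp [coordML]

def phi : PiTensorProduct ℂ (fun _ : Fin r => V) →ₗ[ℂ] ((Fin r → ι) →₀ ℂ) :=
  PiTensorProduct.lift
    (((Finsupp.linearEquivFunOnFinite ℂ ℂ (Fin r → ι)).symm.toLinearMap).compMultilinearMap
      (coordML b r))

lemma phi_tprod_apply (v : Fin r → V) (p : Fin r → ι) :
    phi b r (tprod ℂ v) p = ∏ j, b.repr (v j) (p j) := by
  rw [phi, PiTensorProduct.lift.tprod]
  show ((Finsupp.linearEquivFunOnFinite ℂ ℂ (Fin r → ι)).symm (coordML b r v)) p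
      = ∏ j, b.repr (v j) (p j)
  rw [← coordML_apply]
  rfl

def psi : ((Fin r → ι) →₀ ℂ) →ₗ[ℂ] PiTensorProduct ℂ (fun _ : Fin r => V) :=
  Finsupp.linearCombination ℂ (fun p : Fin r → ι => tprod ℂ (fun j => b (p j)))

lemma psi_single (p : Fin r → ι) :
    psi b r (Finsupp.single p 1) = tprod ℂ (fun j => b (p j)) := by
  rw [psi, Finsupp.linearCombination_single, one_smul]

lemma phi_psi_single (p : Fin r → ι) :
    phi b r (psi b r (Finsupp.single p 1)) = Finsupp.single p 1 := by
  ext q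
  rw [psi_single, phi_tprod_apply, Finsupp.single_apply]
  by_cases h : p = q
  · subst h; simp
  · rw [if_neg h]
    obtain ⟨j, hj⟩ := Function.ne_iff.mp h
    refine Finset.prod_eq_zero (Finset.mem_univ j) ?_
    simp [Finsupp.single_apply, hj]

lemma psi_phi_tprod (v : Fin r → V) :
    psi b r (phi b r (tprod ℂ v)) = tprod ℂ v := by
  have expand : (tprod ℂ (s := fun _ : Fin r => V)) v
      = ∑ q : Fin r → ι, (∏ j, b.repr (v j) (q j)) • tprod ℂ (fun j => b (q j)) := by
    conv_lhs => rw [show v = fun j => ∑ i : ι, b.repr (v j) i • b i from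
      funext fun j => (b.sum_repr (v j)).symm]
    rw [MultilinearMap.map_sum]
    exact Finset.sum_congr rfl fun q _ => MultilinearMap.map_smul_univ _ _ _
  have hlhs : psi b r (phi b r (tprod ℂ v))
      = ∑ q : Fin r → ι, (∏ j, b.repr (v j) (q j)) • tprod ℂ (fun j => b (q j)) := by
    rw [psi, Finsupp.linearCombination_apply, Finsupp.sum_fintype]
    · exact Finset.sum_congr rfl fun q _ => by rw [phi_tprod_apply]
    · intro; simp
  rw [hlhs, ← expand]

lemma phi_comp_psi : phi b r ∘ₗ psi b r = LinearMap.id := by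
  refine Finsupp.lhom_ext fun p c => ?_
  simp only [LinearMap.comp_apply, LinearMap.id_apply]
  calc phi b r (psi b r (Finsupp.single p c))
      = c • phi b r (psi b r (Finsupp.single p 1)) := by
        rw [← map_smul, ← map_smul, Finsupp.smul_single, smul_eq_mul, mul_one]
    _ = Finsupp.single p c := by
        rw [phi_psi_single, Finsupp.smul_single, smul_eq_mul, mul_one]

lemma psi_comp_phi : psi b r ∘ₗ phi b r = LinearMap.id := by
  apply PiTensorProduct.ext
  apply MultilinearMap.ext
  intro v
  simpa using psi_phi_tprod b r v

/-- A basis of the `r`-fold tensor power from a basis of `V`. -/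
def tpBasis : Module.Basis (Fin r → ι) ℂ (PiTensorProduct ℂ (fun _ : Fin r => V)) :=
  Module.Basis.ofRepr (LinearEquiv.ofLinear (phi b r) (psi b r)
    (phi_comp_psi b r) (psi_comp_phi b r))

lemma tpBasis_repr_tprod (v : Fin r → V) (p : Fin r → ι) :
    (tpBasis b r).repr (tprod ℂ v) p = ∏ j, b.repr (v j) (p j) :=
  phi_tprod_apply b r v p

lemma tpBasis_apply (p : Fin r → ι) :
    tpBasis b r p = tprod ℂ (fun j => b (p j)) := by
  rw [← Module.Basis.repr_symm_single_one (tpBasis b r) p,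
    show (tpBasis b r).repr = LinearEquiv.ofLinear (phi b r) (psi b r)
      (phi_comp_psi b r) (psi_comp_phi b r) from rfl,
    LinearEquiv.ofLinear_symm_apply, psi_single]

/-- chain form of the cyclic product -/
lemma chain {n : Type*} [Fintype n] (m : ℕ) (M : ℕ → Matrix n n ℂ) (i : Fin (m + 1) → n) :
    ∏ j : Fin (m + 1), M (j : ℕ) (i j) (i (j - 1))
      = M 0 (i 0) (i (Fin.last m)) *
        ∏ k : Fin m, M ((k : ℕ) + 1) (i k.succ) (i k.castSucc) := by
  have h0 : (0 : Fin (m + 1)) - 1 = Fin.last m := by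
    ext; rw [Fin.coe_sub_one, if_pos rfl, Fin.val_last]
  have hs : ∀ k : Fin m, (k.succ : Fin (m + 1)) - 1 = k.castSucc := by
    intro k; ext
    rw [Fin.coe_sub_one, if_neg (Fin.succ_ne_zero k)]
    simp
  rw [Fin.prod_univ_succ, h0]
  simp only [Fin.val_zero]
  congr 1
  refine Finset.prod_congr rfl fun k _ => ?_
  rw [hs k]
  simp

lemma cyc {n : Type*} [Fintype n] [DecidableEq n] (m : ℕ) (M : ℕ → Matrix n n ℂ) :
    ∑ i : Fin (m + 1) → n, ∏ j : Fin (m + 1), M (j : ℕ) (i j) (i (j - 1))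
      = Matrix.trace (M 0 * (((List.range m).map fun k => M (m - k)).prod)) := by
  induction m generalizing M with
  | zero =>
    simp only [List.range_zero, List.map_nil, List.prod_nil, mul_one]
    have h1 : ∀ i : Fin 1 → n, ∏ j : Fin 1, M (j : ℕ) (i j) (i (j - 1)) = M 0 (i 0) (i 0) := by
      intro i
      rw [Fin.prod_univ_one]
      congr 1
    simp_rw [h1]
    rw [Matrix.trace]
    exact Fintype.sum_equiv (Equiv.funUnique (Fin 1) n) _ _ (fun i => rfl)
  | succ m ih =>
    simp_rw [chain]
    -- split off the last coordinate
    rw [← Equiv.sum_comp (Fin.snocEquiv (fun _ : Fin (m + 2) => n))]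
    rw [Fintype.sum_prod_type]
    have key : ∀ (x : n) (q : Fin (m + 1) → n),
        (M 0 ((Fin.snoc q x : Fin (m + 2) → n) 0)
            ((Fin.snoc q x : Fin (m + 2) → n) (Fin.last (m + 1))) *
          ∏ k : Fin (m + 1), M ((k : ℕ) + 1) ((Fin.snoc q x : Fin (m + 2) → n) k.succ)
            ((Fin.snoc q x : Fin (m + 2) → n) k.castSucc))
        = (M 0 (q 0) x * M (m + 1) x (q (Fin.last m))) *
            ∏ k : Fin m, M ((k : ℕ) + 1) (q k.succ) (q k.castSucc) := by
      intro x q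
      have h0 : (Fin.snoc q x : Fin (m + 2) → n) 0 = q 0 := by
        rw [show (0 : Fin (m + 2)) = Fin.castSucc 0 from rfl, Fin.snoc_castSucc]
      rw [h0, Fin.snoc_last, Fin.prod_univ_castSucc]
      have hsl : (Fin.last m).succ = Fin.last (m + 1) := by ext; simp
      have hterm : M ((Fin.last m : ℕ) + 1) ((Fin.snoc q x : Fin (m + 2) → n) (Fin.last m).succ)
            ((Fin.snoc q x : Fin (m + 2) → n) (Fin.last m).castSucc)
          = M (m + 1) x (q (Fin.last m)) := by
        rw [hsl, Fin.snoc_last, Fin.snoc_castSucc, Fin.val_last]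
      rw [hterm]
      have hrest : ∀ k : Fin m, M ((k.castSucc : ℕ) + 1)
            ((Fin.snoc q x : Fin (m + 2) → n) k.castSucc.succ)
            ((Fin.snoc q x : Fin (m + 2) → n) k.castSucc.castSucc)
          = M ((k : ℕ) + 1) (q k.succ) (q k.castSucc) := by
        intro k
        rw [Fin.succ_castSucc, Fin.snoc_castSucc, Fin.snoc_castSucc, Fin.coe_castSucc]
      rw [Finset.prod_congr rfl fun k _ => hrest k]
      ring
    have keysnoc : ∀ (x : n) (q : Fin (m + 1) → n),
        (fun i : Fin (m + 2) → n => M 0 (i 0) (i (Fin.last (m + 1))) *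
          ∏ k : Fin (m + 1), M ((k : ℕ) + 1) (i k.succ) (i k.castSucc))
          ((Fin.snocEquiv (fun _ : Fin (m + 2) => n)) (x, q))
        = (M 0 (q 0) x * M (m + 1) x (q (Fin.last m))) *
            ∏ k : Fin m, M ((k : ℕ) + 1) (q k.succ) (q k.castSucc) := by
      intro x q
      exact key x q
    simp_rw [keysnoc]
    -- sum over x
    have hx : ∀ q : Fin (m + 1) → n,
        ∑ x : n, ((M 0 (q 0) x * M (m + 1) x (q (Fin.last m))) *
            ∏ k : Fin m, M ((k : ℕ) + 1) (q k.succ) (q k.castSucc))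
        = (M 0 * M (m + 1)) (q 0) (q (Fin.last m)) *
            ∏ k : Fin m, M ((k : ℕ) + 1) (q k.succ) (q k.castSucc) := by
      intro q
      rw [← Finset.sum_mul, Matrix.mul_apply]
    rw [Finset.sum_comm]
    simp_rw [hx]
    -- apply ih with modified M
    set M' : ℕ → Matrix n n ℂ := fun j => if j = 0 then M 0 * M (m + 1) else M j with hM'
    have h0 : M' 0 = M 0 * M (m + 1) := by simp [hM']
    have hsucc : ∀ k : ℕ, M' (k + 1) = M (k + 1) := fun k => by simp [hM']
    have hih := ih M'
    simp_rw [chain] at hih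
    simp_rw [← h0, ← hsucc]
    rw [hih, h0]
    -- now identify the right-hand sides
    have hmap : ((List.range m).map fun k => M' (m - k))
        = (List.range m).map fun k => M (m - k) := by
      refine List.map_congr_left fun k hk => ?_
      rw [List.mem_range] at hk
      rw [hM']
      simp only []
      rw [if_neg (by omega)]
    rw [hmap]
    have hlist : ((List.range (m + 1)).map fun k => M (m + 1 - k)).prod
        = M (m + 1) * ((List.range m).map fun k => M (m - k)).prod := by
      rw [List.range_succ_eq_map, List.map_cons, List.prod_cons, List.map_map]
      have hmm : List.map ((fun k => M (m + 1 - k)) ∘ Nat.succ) (List.range m)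
          = List.map (fun k => M (m - k)) (List.range m) :=
        List.map_congr_left fun k _ => by
          simp only [Function.comp_apply]
          exact congrArg M (by omega)
      rw [hmm]
      norm_num
    rw [hlist, Matrix.mul_assoc]

def toEndHom : (V ≃ₗ[ℂ] V) →* (V →ₗ[ℂ] V) where
  toFun e := e.toLinearMap
  map_one' := rfl
  map_mul' _ _ := rfl

lemma toMatrix_list_prod (l : List (V →ₗ[ℂ] V)) :
    LinearMap.toMatrix b b l.prod = (l.map (LinearMap.toMatrix b b)).prod := by
  induction l with
  | nil => simp
  | cons a l ih => rw [List.prod_cons, List.map_cons, List.prod_cons, LinearMap.toMatrix_mul, ih]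

end Stmt10Aux

end Stmt10Aux

/-- 1.12: the character identity `π̃₀(gσ) = ξ̃(N_r(g)σ^r)`: the trace of the twisted
cyclic-shift endomorphism of `V^{⊗r}` determined by
`v₁ ⊗ ⋯ ⊗ v_r ↦ π(g)(S v_r) ⊗ π(σ⁻¹ g)(v₁) ⊗ ⋯ ⊗ π(σ^{−(r−1)} g)(v_{r−1})`
equals `Tr(π(g·σ(g)⋯σ^{r−1}(g)) ∘ S)`. -/
theorem stmt10 {Γ : Type*} [Group Γ] (σ : MulAut Γ) (r : ℕ) [NeZero r]
    {V : Type*} [AddCommGroup V] [Module ℂ V] [FiniteDimensional ℂ V]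
    (π : Γ →* (V ≃ₗ[ℂ] V))
    (S : V ≃ₗ[ℂ] V)
    (hS : ∀ (h : Γ) (v : V), S (π h v) = π ((σ ^ r) h) (S v))
    (g : Γ)
    (Φ : PiTensorProduct ℂ (fun _ : Fin r => V) →ₗ[ℂ]
        PiTensorProduct ℂ (fun _ : Fin r => V))
    (hΦ : ∀ v : Fin r → V,
      Φ (PiTensorProduct.tprod ℂ v) =
        PiTensorProduct.tprod ℂ (fun j : Fin r =>
          if j = 0 then π g (S (v (j - 1))) else π ((σ⁻¹ ^ (j : ℕ)) g) (v (j - 1)))) :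
    LinearMap.trace ℂ (PiTensorProduct ℂ (fun _ : Fin r => V)) Φ =
      LinearMap.trace ℂ V
        ((π (((List.range r).map fun i => (σ ^ i) g).prod)).toLinearMap ∘ₗ S.toLinearMap) := by
  classical
  obtain ⟨m, rfl⟩ : ∃ m, r = m + 1 :=
    ⟨r - 1, (Nat.succ_pred_eq_of_ne_zero (NeZero.ne r)).symm⟩
  set b := Module.finBasis ℂ V with hb
  set A : ℕ → (V →ₗ[ℂ] V) := fun j =>
    if j = 0 then (π g).toLinearMap ∘ₗ S.toLinearMap
    else (π ((σ⁻¹ ^ j) g)).toLinearMap with hA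
  set B := Stmt10Aux.tpBasis b (m + 1) with hB
  set ρ : Γ →* (V →ₗ[ℂ] V) := Stmt10Aux.toEndHom.comp π with hρ
  -- Step 1: trace of Φ as a cyclic sum of matrix entries
  have step1 : LinearMap.trace ℂ (PiTensorProduct ℂ (fun _ : Fin (m + 1) => V)) Φ
      = ∑ p : Fin (m + 1) → Fin (Module.finrank ℂ V),
          ∏ j : Fin (m + 1),
            (LinearMap.toMatrix b b (A (j : ℕ))) (p j) (p (j - 1)) := by
    rw [LinearMap.trace_eq_matrix_trace ℂ B Φ, Matrix.trace]
    refine Finset.sum_congr rfl fun p _ => ?_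
    have harg : Φ (PiTensorProduct.tprod ℂ (fun j => b (p j)))
        = PiTensorProduct.tprod ℂ (fun j : Fin (m + 1) => A (j : ℕ) (b (p (j - 1)))) := by
      rw [hΦ]
      congr 1
      funext j
      by_cases hj : j = 0
      · subst hj; simp [hA]
      · rw [if_neg hj, hA]
        simp only []
        rw [if_neg (show (j : ℕ) ≠ 0 from fun h => hj (Fin.val_injective (by simpa using h)))]
        rfl
    calc (LinearMap.toMatrix B B Φ).diag p
        = B.repr (Φ (B p)) p := by rw [Matrix.diag_apply, LinearMap.toMatrix_apply]
      _ = ∏ j : Fin (m + 1), b.repr ((A (j : ℕ)) (b (p (j - 1)))) (p j) := by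
          rw [hB, Stmt10Aux.tpBasis_apply, harg, Stmt10Aux.tpBasis_repr_tprod]
      _ = ∏ j : Fin (m + 1), (LinearMap.toMatrix b b (A (j : ℕ))) (p j) (p (j - 1)) :=
          Finset.prod_congr rfl fun j _ => (LinearMap.toMatrix_apply b b _ _ _).symm
  -- Step 2: the cyclic sum is a trace of a product of matrices
  have step2 := Stmt10Aux.cyc m (fun j => LinearMap.toMatrix b b (A j))
  -- Step 3: back to linear maps
  have step3 : (LinearMap.toMatrix b b (A 0)) *
        (((List.range m).map fun k => LinearMap.toMatrix b b (A (m - k))).prod)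
      = LinearMap.toMatrix b b (A 0 * ((List.range m).map fun k => A (m - k)).prod) := by
    rw [LinearMap.toMatrix_mul, Stmt10Aux.toMatrix_list_prod, List.map_map]
    rfl
  -- Step 4: identify the composed linear map
  have hcomm : ∀ h : Γ, S.toLinearMap ∘ₗ ρ h = ρ ((σ ^ (m + 1)) h) ∘ₗ S.toLinearMap :=
    fun h => LinearMap.ext fun v => hS h v
  have hP : ((List.range m).map fun k => A (m - k)).prod
      = ρ (((List.range m).map fun k => (σ⁻¹ ^ (m - k)) g).prod) := by
    rw [map_list_prod ρ, List.map_map]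
    refine congrArg List.prod (List.map_congr_left fun k hk => ?_)
    rw [List.mem_range] at hk
    simp only [Function.comp_apply, hA]
    rw [if_neg (by omega)]
    rfl
  have hpow : ∀ k, k < m → (σ ^ (m + 1)) ((σ⁻¹ ^ (m - k)) g) = (σ ^ (k + 1)) g := by
    intro k hk
    have hsplit : σ ^ (m + 1) = σ ^ (k + 1) * σ ^ (m - k) := by
      rw [← pow_add]
      exact congrArg (σ ^ ·) (by omega)
    rw [hsplit, MulAut.mul_apply, inv_pow, MulAut.inv_def, MulEquiv.apply_symm_apply]
  have hgroup : g * (σ ^ (m + 1)) (((List.range m).map fun k => (σ⁻¹ ^ (m - k)) g).prod)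
      = ((List.range (m + 1)).map fun i => (σ ^ i) g).prod := by
    rw [map_list_prod ((σ ^ (m + 1)) : Γ ≃* Γ), List.map_map,
      List.range_succ_eq_map, List.map_cons, List.prod_cons, List.map_map]
    congr 1
    refine congrArg List.prod (List.map_congr_left fun k hk => ?_)
    rw [List.mem_range] at hk
    simp only [Function.comp_apply]
    exact hpow k hk
  have step4 : A 0 * ((List.range m).map fun k => A (m - k)).prod
      = (π (((List.range (m + 1)).map fun i => (σ ^ i) g).prod)).toLinearMap ∘ₗ S.toLinearMap := by
    rw [hP, hA]
    simp only [if_pos rfl]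
    show ((π g).toLinearMap ∘ₗ S.toLinearMap) ∘ₗ
        ρ (((List.range m).map fun k => (σ⁻¹ ^ (m - k)) g).prod) = _
    rw [LinearMap.comp_assoc, hcomm, ← LinearMap.comp_assoc]
    have : (π g).toLinearMap ∘ₗ
          ρ ((σ ^ (m + 1)) (((List.range m).map fun k => (σ⁻¹ ^ (m - k)) g).prod))
        = ρ (g * (σ ^ (m + 1)) (((List.range m).map fun k => (σ⁻¹ ^ (m - k)) g).prod)) :=
      (map_mul ρ _ _).symm
    rw [this, hgroup]
    rfl
  rw [step1, step2, step3, step4, ← LinearMap.trace_eq_matrix_trace ℂ b]
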